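/- For every natural number n ≥ 1, the polynomial T_n(u,v) = Σ_{k=0}^{n} C(n,k)·C(n,k-1)·u^k·v^{n-k+1} (where C(n,j) denotes the binomial coefficient, with C(n,-1)=0) satisfies the identity v·∂²T_n/∂v² = u·∂²T_n/∂u² for all real u, v. -/

import Mathlib

open Real Finset

/-- Conserved density of the shallow water hierarchy:
`T n u v = ∑_{k=0}^{n} C(n,k) * C(n,k-1) * u^k * v^(n-k+1)`, with `C(n,-1) = 0`. -/
noncomputable def Tsw (n : ℕ) (u v : ℝ) : ℝ :=
  ∑ k ∈ Finset.range (n + 1),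
    ((n.choose k : ℝ) * (if k = 0 then (0 : ℝ) else (n.choose (k - 1) : ℝ))) *
      u ^ k * v ^ (n - k + 1)

private lemma deriv_sum_pow (N : ℕ) (c : ℕ → ℝ) (e : ℕ → ℕ) :
    deriv (fun x : ℝ => ∑ k ∈ Finset.range N, c k * x ^ e k)
      = fun x : ℝ => ∑ k ∈ Finset.range N, (c k * (e k : ℝ)) * x ^ (e k - 1) := by
  funext x
  rw [deriv_fun_sum (fun k _ => (differentiableAt_pow (e k)).const_mul (c k))]
  refine Finset.sum_congr rfl fun k _ => ?_
  rw [deriv_const_mul _ (differentiableAt_pow (e k)), deriv_pow_field]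
  ring

private lemma deriv2_sum_pow (N : ℕ) (c : ℕ → ℝ) (e : ℕ → ℕ) :
    deriv (deriv (fun x : ℝ => ∑ k ∈ Finset.range N, c k * x ^ e k))
      = fun x : ℝ => ∑ k ∈ Finset.range N,
          ((c k * (e k : ℝ)) * ((e k - 1 : ℕ) : ℝ)) * x ^ (e k - 2) := by
  rw [deriv_sum_pow, deriv_sum_pow]
  funext x
  refine Finset.sum_congr rfl fun k _ => ?_
  have : e k - 1 - 1 = e k - 2 := by omega
  rw [this]

theorem shallow_water_density_identity (n : ℕ) (hn : 1 ≤ n) (u v : ℝ) :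
    v * deriv (deriv (fun v' => Tsw n u v')) v = u * deriv (deriv (fun u' => Tsw n u' v)) u := by
  set b : ℕ → ℝ := fun k =>
    (n.choose k : ℝ) * (if k = 0 then (0 : ℝ) else (n.choose (k - 1) : ℝ)) with hb
  have hv : (fun v' => Tsw n u v')
      = fun x : ℝ => ∑ k ∈ Finset.range (n + 1), (b k * u ^ k) * x ^ (n - k + 1) := by
    funext x; simp only [Tsw, hb]
  have hu : (fun u' => Tsw n u' v)
      = fun x : ℝ => ∑ k ∈ Finset.range (n + 1), (b k * v ^ (n - k + 1)) * x ^ k := by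
    funext x; simp only [Tsw, hb]
    exact Finset.sum_congr rfl fun k _ => by ring
  rw [hv, hu, deriv2_sum_pow, deriv2_sum_pow, Finset.mul_sum, Finset.mul_sum]
  have hL : ∀ k ∈ Finset.range (n + 1),
      v * ((((b k * u ^ k) * ((n - k + 1 : ℕ) : ℝ)) * ((n - k + 1 - 1 : ℕ) : ℝ))
          * v ^ (n - k + 1 - 2))
        = b k * (((n - k + 1) * (n - k) : ℕ) : ℝ) * u ^ k * v ^ (n - k) := by
    intro k hk
    rw [Finset.mem_range] at hk
    rcases eq_or_lt_of_le (Nat.lt_succ_iff.mp hk) with h | h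
    · have h1 : n - k + 1 - 1 = 0 := by omega
      have h2 : (n - k + 1) * (n - k) = 0 := by
        have h3 : n - k = 0 := by omega
        simp [h3]
      rw [h1, h2]; push_cast; ring
    · have e1 : n - k + 1 - 1 = n - k := by omega
      have e2 : n - k + 1 - 2 = n - k - 1 := by omega
      have e3 : n - k - 1 + 1 = n - k := by omega
      rw [e1, e2]
      have : v ^ (n - k) = v ^ (n - k - 1) * v := by
        rw [← pow_succ, e3]
      rw [this]
      push_cast
      ring
  have hR : ∀ k ∈ Finset.range (n + 1),
      u * ((((b k * v ^ (n - k + 1)) * (k : ℝ)) * ((k - 1 : ℕ) : ℝ)) * u ^ (k - 2))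
        = b k * ((k * (k - 1) : ℕ) : ℝ) * u ^ (k - 1) * v ^ (n - k + 1) := by
    intro k _
    rcases Nat.lt_or_ge k 2 with h | h
    · interval_cases k <;> push_cast <;> ring
    · have e1 : k - 1 = k - 2 + 1 := by omega
      have : u ^ (k - 1) = u ^ (k - 2) * u := by rw [e1, pow_succ]
      rw [this]
      push_cast
      ring
  rw [Finset.sum_congr rfl hL, Finset.sum_congr rfl hR]
  rw [Finset.sum_range_succ, Finset.sum_range_succ']
  have hFn : b n * (((n - n + 1) * (n - n) : ℕ) : ℝ) * u ^ n * v ^ (n - n) = 0 := by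
    have : (n - n + 1) * (n - n) = 0 := by simp
    rw [this]; push_cast; ring
  have hG0 : b 0 * ((0 * (0 - 1) : ℕ) : ℝ) * u ^ (0 - 1) * v ^ (n - 0 + 1) = 0 := by
    norm_num
  rw [hFn, hG0, add_zero, add_zero]
  refine Finset.sum_congr rfl fun k hk => ?_
  rw [Finset.mem_range] at hk
  have hb1 : b (k + 1) = (n.choose (k + 1) : ℝ) * (n.choose k : ℝ) := by
    simp [hb]
  rcases Nat.eq_zero_or_pos k with rfl | hk1
  · simp [hb, hb1]
  · have hbk : b k = (n.choose k : ℝ) * (n.choose (k - 1) : ℝ) := by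
      simp [hb, Nat.pos_iff_ne_zero.mp hk1]
    have key : n.choose k * n.choose (k - 1) * ((n - k + 1) * (n - k))
        = n.choose (k + 1) * n.choose k * ((k + 1) * k) := by
      have h1 : n.choose (k + 1) * (k + 1) = n.choose k * (n - k) :=
        Nat.choose_succ_right_eq n k
      have h2 : n.choose k * k = n.choose (k - 1) * (n - k + 1) := by
        have := Nat.choose_succ_right_eq n (k - 1)
        have e : k - 1 + 1 = k := by omega
        rw [e] at this
        rw [this]
        congr 1
        omega
      calc n.choose k * n.choose (k - 1) * ((n - k + 1) * (n - k))
          = (n.choose k * (n - k)) * (n.choose (k - 1) * (n - k + 1)) := by ring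
        _ = (n.choose (k + 1) * (k + 1)) * (n.choose k * k) := by rw [h1, h2]
        _ = n.choose (k + 1) * n.choose k * ((k + 1) * k) := by ring
    have e4 : n - (k + 1) + 1 = n - k := by omega
    have e5 : k + 1 - 1 = k := by omega
    rw [hbk, hb1, e4, e5]
    have keyR := congrArg (fun m : ℕ => (m : ℝ)) key
    push_cast at keyR
    push_cast
    linear_combination (u ^ k * v ^ (n - k)) * keyR
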